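/- Let G be a simple mixed graph on n vertices with at least one edge or at least one arc. Then ν₁(G) ≤ max S, where S is the finite set consisting of all numbers d u + d v + d⁺ u + d⁺ v and d u + d v + d⁻ u + d⁻ v for pairs u, v with E u v = 1, together with all numbers d u + d v + d⁺ u + d⁻ v for pairs u, v with A u v = 1. -/

import Mathlib

set_option linter.unusedSectionVars false

open Matrix Finset Polynomial

variable {V : Type*} [Fintype V] [DecidableEq V]

/-- Undirected adjacency matrix of the mixed graph with edge-multiplicity function `E`:
`(u,v)`-entry `E u v` for `u ≠ v`, and `(v,v)`-entry `2 * E v v`. -/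
def Au (E : V → V → ℕ) : Matrix V V ℝ :=
  Matrix.of fun u v => if u = v then ((2 * E v v : ℕ) : ℝ) else ((E u v : ℕ) : ℝ)

/-- Arc matrix of the mixed graph with arc-multiplicity function `A`. -/
def Bm (A : V → V → ℕ) : Matrix V V ℝ := Matrix.of fun u v => ((A u v : ℕ) : ℝ)

/-- Undirected degree `d v`. -/
def dU (E : V → V → ℕ) (v : V) : ℕ :=
  (∑ u ∈ Finset.univ.filter (fun u => u ≠ v), E v u) + 2 * E v v

/-- Out-degree `d⁺ v`. -/
def dOut (A : V → V → ℕ) (v : V) : ℕ := ∑ u, A v u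

/-- In-degree `d⁻ v`. -/
def dIn (A : V → V → ℕ) (v : V) : ℕ := ∑ u, A u v

/-- Integrated adjacency matrix `𝓘(G) = [[Aᵤ, B], [Bᵀ, Aᵤ]]`. -/
def intAdj (E A : V → V → ℕ) : Matrix (V ⊕ V) (V ⊕ V) ℝ :=
  Matrix.fromBlocks (Au E) (Bm A) (Bm A)ᵀ (Au E)

/-- Integrated degree matrix `𝓘ᴰ(G)`. -/
def intDeg (E A : V → V → ℕ) : Matrix (V ⊕ V) (V ⊕ V) ℝ :=
  Matrix.diagonal (Sum.elim (fun v => ((dU E v + dOut A v : ℕ) : ℝ))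
    (fun v => ((dU E v + dIn A v : ℕ) : ℝ)))

/-- Integrated Laplacian matrix `𝓘ᴸ(G) = 𝓘ᴰ(G) - 𝓘(G)`. -/
def intLap (E A : V → V → ℕ) : Matrix (V ⊕ V) (V ⊕ V) ℝ := intDeg E A - intAdj E A

/-- Integrated signless Laplacian matrix `𝓘Q(G) = 𝓘ᴰ(G) + 𝓘(G)`. -/
def intQ (E A : V → V → ℕ) : Matrix (V ⊕ V) (V ⊕ V) ℝ := intDeg E A + intAdj E A

/-- A mixed graph is simple: multiplicities at most 1, no loops, no directed loops. -/
def IsSimple (E A : V → V → ℕ) : Prop :=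
  (∀ u v, E u v ≤ 1) ∧ (∀ u v, A u v ≤ 1) ∧ (∀ v, E v v = 0) ∧ (∀ v, A v v = 0)

/-- Number of edges (excluding loops): `e(G) = (1/2)·Σ_{u ≠ v} E u v`. -/
noncomputable def numEdges (E : V → V → ℕ) : ℝ :=
  (∑ u, ∑ v ∈ Finset.univ.filter (fun v => v ≠ u), (E u v : ℝ)) / 2

/-- Number of loops: `l(G) = Σ_v E v v`. -/
noncomputable def numLoops (E : V → V → ℕ) : ℝ := ∑ v, (E v v : ℝ)

/-- Number of arcs (including directed loops): `a(G) = Σ_{u,v} A u v`. -/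
noncomputable def numArcs (A : V → V → ℕ) : ℝ := ∑ u, ∑ v, (A u v : ℝ)

lemma intAdj_isHermitian (E A : V → V → ℕ) (hE : ∀ u v, E u v = E v u) :
    (intAdj E A).IsHermitian := by
  have hAu : (Au E)ᵀ = Au E := by
    ext u v
    by_cases h : u = v
    · subst h; rfl
    · simp [Au, Matrix.transpose_apply, h, Ne.symm h, hE u v]
  show (intAdj E A)ᴴ = intAdj E A
  rw [Matrix.conjTranspose_eq_transpose_of_trivial]
  unfold intAdj
  rw [Matrix.fromBlocks_transpose, hAu, Matrix.transpose_transpose]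

lemma intLap_isHermitian (E A : V → V → ℕ) (hE : ∀ u v, E u v = E v u) :
    (intLap E A).IsHermitian :=
  (Matrix.isHermitian_diagonal _).sub (intAdj_isHermitian E A hE)

lemma intQ_isHermitian (E A : V → V → ℕ) (hE : ∀ u v, E u v = E v u) :
    (intQ E A).IsHermitian :=
  (Matrix.isHermitian_diagonal _).add (intAdj_isHermitian E A hE)

/-- The non-increasing rearrangement of a finite tuple of reals. -/
noncomputable def sortDesc {N : ℕ} (f : Fin N → ℝ) : Fin N → ℝ :=
  fun i => (f ∘ Tuple.sort f) i.rev

/-- The eigenvalues of the integrated Laplacian matrix `𝓘ᴸ(G)`, in non-increasing order: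
`nuT E A hE i` is `ν_{i+1}(G)` (0-indexed). -/
noncomputable def nuT {n : ℕ} (E A : Fin n → Fin n → ℕ) (hE : ∀ u v, E u v = E v u) :
    Fin (n + n) → ℝ :=
  sortDesc (fun i => (intLap_isHermitian E A hE).eigenvalues (finSumFinEquiv.symm i))

/-- The eigenvalues of the integrated signless Laplacian matrix `𝓘Q(G)`, in non-increasing
order: `xiT E A hE i` is `ξ_{i+1}(G)` (0-indexed). -/
noncomputable def xiT {n : ℕ} (E A : Fin n → Fin n → ℕ) (hE : ∀ u v, E u v = E v u) :
    Fin (n + n) → ℝ :=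
  sortDesc (fun i => (intQ_isHermitian E A hE).eigenvalues (finSumFinEquiv.symm i))

/-- The eigenvalues of the integrated adjacency matrix `𝓘(G)`, in non-increasing order:
`lamT E A hE i` is `λ_{i+1}(G)` (0-indexed). -/
noncomputable def lamT {n : ℕ} (E A : Fin n → Fin n → ℕ) (hE : ∀ u v, E u v = E v u) :
    Fin (n + n) → ℝ :=
  sortDesc (fun i => (intAdj_isHermitian E A hE).eigenvalues (finSumFinEquiv.symm i))

/-- Main estimate for a nonnegative matrix `M` and Laplacian-type eigen-equation, assuming
the eigenvector has a positive maximal entry. -/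
lemma key_aux {N : Type*} [Fintype N] [DecidableEq N] (M : Matrix N N ℝ)
    (hnn : ∀ i j, 0 ≤ M i j) (ν : ℝ) (x : N → ℝ)
    (heq : ∀ k, (∑ j, M k j) * x k - ∑ j, M k j * x j = ν * x k)
    (i : N) (hi0 : 0 < x i) (hmax : ∀ k, x k ≤ x i) :
    ν ≤ 0 ∨ ∃ a b, M a b ≠ 0 ∧ ν ≤ (∑ k, M a k) + (∑ k, M b k) := by
  by_cases hD : ∀ j, M i j = 0
  · left
    have h0 : (∑ j, M i j) = 0 := Finset.sum_eq_zero (fun j _ => hD j)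
    have h1 : (∑ j, M i j * x j) = 0 := Finset.sum_eq_zero (fun j _ => by rw [hD j]; ring)
    have := heq i
    rw [h0, h1] at this
    nlinarith
  · push_neg at hD
    obtain ⟨j0, hj0⟩ := hD
    have hTne : (Finset.univ.filter (fun j => M i j ≠ 0)).Nonempty :=
      ⟨j0, by simp [hj0]⟩
    obtain ⟨j, hjmem, hjmin⟩ := Finset.exists_min_image _ x hTne
    have hjM : M i j ≠ 0 := (Finset.mem_filter.mp hjmem).2
    have hsum1 : (∑ k, M i k) * x j ≤ ∑ k, M i k * x k := by
      rw [Finset.sum_mul]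
      refine Finset.sum_le_sum (fun k _ => ?_)
      by_cases hk : M i k = 0
      · rw [hk]; simp
      · exact mul_le_mul_of_nonneg_left
          (hjmin k (Finset.mem_filter.mpr ⟨Finset.mem_univ k, hk⟩)) (hnn i k)
    have hsum2 : (∑ k, M j k * x k) ≤ (∑ k, M j k) * x i := by
      rw [Finset.sum_mul]
      exact Finset.sum_le_sum (fun k _ => mul_le_mul_of_nonneg_left (hmax k) (hnn j k))
    have hei := heq i
    have hej := heq j
    rcases eq_or_lt_of_le (hmax j) with h | h
    · left
      rw [h] at hsum1
      have hnu : ν * x i ≤ 0 * x i := by linarith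
      exact le_of_mul_le_mul_right hnu hi0
    · right
      exact ⟨i, j, hjM, by nlinarith [hsum1, hsum2, hei, hej]⟩

lemma key {N : Type*} [Fintype N] [DecidableEq N] (M : Matrix N N ℝ)
    (hnn : ∀ i j, 0 ≤ M i j) (ν : ℝ) (x : N → ℝ) (hx : x ≠ 0)
    (heq : ∀ k, (∑ j, M k j) * x k - ∑ j, M k j * x j = ν * x k) :
    ν ≤ 0 ∨ ∃ a b, M a b ≠ 0 ∧ ν ≤ (∑ k, M a k) + (∑ k, M b k) := by
  cases isEmpty_or_nonempty N with
  | inl hemp => exact absurd (_root_.funext fun k => (IsEmpty.false k).elim) hx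
  | inr hne =>
    obtain ⟨i, -, hi⟩ := Finset.exists_max_image Finset.univ (fun k => |x k|)
      Finset.univ_nonempty
    have hipos : 0 < |x i| := by
      rcases Function.ne_iff.mp hx with ⟨k, hk⟩
      have : 0 < |x k| := abs_pos.mpr hk
      exact this.trans_le (hi k (Finset.mem_univ k))
    have habs : ∀ k, |x k| ≤ |x i| := fun k => hi k (Finset.mem_univ k)
    rcases (abs_pos.mp hipos).lt_or_gt with hneg | hpos
    · refine key_aux M hnn ν (fun k => -x k) (fun k => ?_) i (show (0:ℝ) < -x i by linarith)
        (fun k => show -x k ≤ -x i from ?_)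
      · show (∑ j, M k j) * -x k - ∑ j, M k j * -x j = ν * -x k
        have h1 : ∑ j, M k j * -x j = -∑ j, M k j * x j := by
          rw [← Finset.sum_neg_distrib]; exact Finset.sum_congr rfl (fun j _ => by ring)
        rw [h1]
        have := heq k
        ring_nf
        ring_nf at this
        linarith
      · have := neg_abs_le (x k)
        have h2 := habs k
        rw [abs_of_neg hneg] at h2
        linarith [abs_nonneg (x k), neg_le_abs (x k), le_abs_self (x k)]
    · refine key_aux M hnn ν x heq i hpos (fun k => ?_)
      have h2 := habs k
      rw [abs_of_pos hpos] at h2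
      exact (le_abs_self (x k)).trans h2
/-- `ν₁(G) ≤ max S` where `S` consists of the numbers
`d u + d v + d⁺ u + d⁺ v` and `d u + d v + d⁻ u + d⁻ v` over pairs `u, v` with `E u v = 1`,
together with `d u + d v + d⁺ u + d⁻ v` over pairs `u, v` with `A u v = 1`.  (`max S` is
expressed by: some element of the finite nonempty set `S` bounds `ν₁(G)` and all of `S`.) -/
theorem stmt14 (n : ℕ) (E A : Fin n → Fin n → ℕ) (hE : ∀ u v, E u v = E v u)
    (hS : IsSimple E A)
    (hedge : (∃ u v, u ≠ v ∧ 1 ≤ E u v) ∨ (∃ u v, 1 ≤ A u v))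
    (S : Finset ℝ)
    (hSdef : S =
      (((Finset.univ ×ˢ Finset.univ).filter
          (fun p : Fin n × Fin n => E p.1 p.2 = 1)).image
          (fun p => ((dU E p.1 + dU E p.2 + dOut A p.1 + dOut A p.2 : ℕ) : ℝ)))
      ∪ (((Finset.univ ×ˢ Finset.univ).filter
          (fun p : Fin n × Fin n => E p.1 p.2 = 1)).image
          (fun p => ((dU E p.1 + dU E p.2 + dIn A p.1 + dIn A p.2 : ℕ) : ℝ)))
      ∪ (((Finset.univ ×ˢ Finset.univ).filter
          (fun p : Fin n × Fin n => A p.1 p.2 = 1)).image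
          (fun p => ((dU E p.1 + dU E p.2 + dOut A p.1 + dIn A p.2 : ℕ) : ℝ)))) :
    ∃ x ∈ S,
      nuT E A hE ⟨0, by rcases hedge with ⟨u, -⟩ | ⟨u, -⟩ <;> (have := u.pos; omega)⟩ ≤ x ∧
        ∀ y ∈ S, y ≤ x := by
  obtain ⟨hE1, hA1, hEloop, hAloop⟩ := hS
  -- basic entry facts
  have hAu : ∀ v u : Fin n, Au E v u = ((E v u : ℕ) : ℝ) := by
    intro v u
    by_cases h : v = u
    · subst h; simp [Au, hEloop]
    · simp [Au, h]
  have hdUc : ∀ v : Fin n, ((dU E v : ℕ) : ℝ) = ∑ u, ((E v u : ℕ) : ℝ) := by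
    intro v
    have h := Finset.add_sum_erase Finset.univ (fun u => ((E v u : ℕ) : ℝ))
      (Finset.mem_univ v)
    simp only [hEloop v, Nat.cast_zero, zero_add] at h
    rw [dU, Finset.filter_ne']
    push_cast
    rw [hEloop v]
    push_cast
    simpa using h
  set M : Matrix (Fin n ⊕ Fin n) (Fin n ⊕ Fin n) ℝ := intAdj E A with hMdef
  have hMnn : ∀ i j, 0 ≤ M i j := by
    rintro (u | u) (v | v) <;>
      simp only [hMdef, intAdj, Matrix.fromBlocks_apply₁₁, Matrix.fromBlocks_apply₁₂,
        Matrix.fromBlocks_apply₂₁, Matrix.fromBlocks_apply₂₂, Matrix.transpose_apply,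
        hAu, Bm, Matrix.of_apply] <;> positivity
  have hrow : ∀ k, (∑ j, M k j) =
      Sum.elim (fun v => ((dU E v + dOut A v : ℕ) : ℝ))
        (fun v => ((dU E v + dIn A v : ℕ) : ℝ)) k := by
    rintro (v | v) <;>
      rw [Fintype.sum_sum_type] <;>
      simp only [hMdef, intAdj, Matrix.fromBlocks_apply₁₁, Matrix.fromBlocks_apply₁₂,
        Matrix.fromBlocks_apply₂₁, Matrix.fromBlocks_apply₂₂, Matrix.transpose_apply,
        hAu, Bm, Matrix.of_apply, Sum.elim_inl, Sum.elim_inr]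
    · rw [Nat.cast_add, hdUc v]
      have : ((dOut A v : ℕ) : ℝ) = ∑ u, ((A v u : ℕ) : ℝ) := by rw [dOut]; push_cast; rfl
      rw [this]
    · rw [Nat.cast_add, hdUc v]
      have : ((dIn A v : ℕ) : ℝ) = ∑ u, ((A u v : ℕ) : ℝ) := by rw [dIn]; push_cast; rfl
      rw [this]
      ring
  -- S is nonempty
  have hSne : S.Nonempty := by
    rcases hedge with ⟨u, v, huv, h1⟩ | ⟨u, v, h1⟩
    · refine ⟨((dU E u + dU E v + dOut A u + dOut A v : ℕ) : ℝ), ?_⟩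
      rw [hSdef]
      refine Finset.mem_union.mpr (Or.inl (Finset.mem_union.mpr (Or.inl ?_)))
      exact Finset.mem_image.mpr ⟨(u, v), Finset.mem_filter.mpr
        ⟨Finset.mem_product.mpr ⟨Finset.mem_univ _, Finset.mem_univ _⟩,
          le_antisymm (hE1 u v) h1⟩, rfl⟩
    · refine ⟨((dU E u + dU E v + dOut A u + dIn A v : ℕ) : ℝ), ?_⟩
      rw [hSdef]
      refine Finset.mem_union.mpr (Or.inr ?_)
      exact Finset.mem_image.mpr ⟨(u, v), Finset.mem_filter.mpr
        ⟨Finset.mem_product.mpr ⟨Finset.mem_univ _, Finset.mem_univ _⟩,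
          le_antisymm (hA1 u v) h1⟩, rfl⟩
  -- every element of S is nonnegative
  have hSnn : ∀ s ∈ S, (0 : ℝ) ≤ s := by
    intro s hs
    rw [hSdef] at hs
    rcases Finset.mem_union.mp hs with hs' | hs'
    · rcases Finset.mem_union.mp hs' with hs'' | hs'' <;>
        · obtain ⟨p, -, rfl⟩ := Finset.mem_image.mp hs''
          positivity
    · obtain ⟨p, -, rfl⟩ := Finset.mem_image.mp hs'
      positivity
  refine ⟨S.max' hSne, S.max'_mem hSne, ?_, fun y hy => S.le_max' y hy⟩
  -- reduce to an eigenvalue bound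
  suffices hall : ∀ i : Fin (n + n), nuT E A hE i ≤ S.max' hSne from hall _
  intro i
  obtain ⟨k, hk⟩ : ∃ k, nuT E A hE i = (intLap_isHermitian E A hE).eigenvalues k := ⟨_, rfl⟩
  rw [hk]
  set hH := intLap_isHermitian E A hE
  set ν : ℝ := hH.eigenvalues k with hν
  set x : (Fin n ⊕ Fin n) → ℝ := (WithLp.equiv 2 _) (hH.eigenvectorBasis k) with hxdef
  have hvec : intLap E A *ᵥ x = ν • x := hH.mulVec_eigenvectorBasis k
  have hx : x ≠ 0 := by
    intro h
    have h0 : hH.eigenvectorBasis k = 0 :=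
      (WithLp.equiv 2 _).injective (h.trans (WithLp.ofLp_zero (p := 2)).symm)
    exact hH.eigenvectorBasis.orthonormal.ne_zero k h0
  have heq : ∀ l, (∑ j, M l j) * x l - ∑ j, M l j * x j = ν * x l := by
    intro l
    have h1 := congrFun hvec l
    rw [intLap, Matrix.sub_mulVec] at h1
    have h2 : (intDeg E A *ᵥ x) l =
        Sum.elim (fun v => ((dU E v + dOut A v : ℕ) : ℝ))
          (fun v => ((dU E v + dIn A v : ℕ) : ℝ)) l * x l := by
      rw [intDeg, Matrix.mulVec_diagonal]
    have h3 : (intAdj E A *ᵥ x) l = ∑ j, M l j * x j := by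
      simp [Matrix.mulVec, dotProduct, hMdef]
    rw [Pi.sub_apply, h2, h3, ← hrow l] at h1
    simpa using h1
  rcases key M hMnn ν x hx heq with hle | ⟨a, b, hab, hle⟩
  · obtain ⟨s, hs⟩ := hSne
    exact hle.trans ((hSnn s hs).trans (S.le_max' s hs))
  · -- translate the edge (a, b) into an element of S
    have hbound : ∃ s ∈ S, ν ≤ s := by
      rw [hrow a, hrow b] at hle
      rcases a with u | u <;> rcases b with v | v
      · have hEuv : E u v = 1 := by
          by_cases h : u = v
          · exfalso; apply hab
            simp [hMdef, intAdj, hAu, h, hEloop]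
          · have : Au E u v ≠ 0 := by
              simpa [hMdef, intAdj] using hab
            rw [hAu] at this
            have h1 : E u v ≠ 0 := by exact_mod_cast this
            have := hE1 u v
            omega
        refine ⟨((dU E u + dU E v + dOut A u + dOut A v : ℕ) : ℝ), ?_, ?_⟩
        · rw [hSdef]
          refine Finset.mem_union.mpr (Or.inl (Finset.mem_union.mpr (Or.inl ?_)))
          exact Finset.mem_image.mpr ⟨(u, v), Finset.mem_filter.mpr
            ⟨Finset.mem_product.mpr ⟨Finset.mem_univ _, Finset.mem_univ _⟩, hEuv⟩, rfl⟩
        · simp only [Sum.elim_inl] at hle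
          push_cast at hle ⊢
          linarith
      · have hAuv : A u v = 1 := by
          have h1 : A u v ≠ 0 := fun hz => hab (by simp [hMdef, intAdj, Bm, hz])
          have := hA1 u v
          omega
        refine ⟨((dU E u + dU E v + dOut A u + dIn A v : ℕ) : ℝ), ?_, ?_⟩
        · rw [hSdef]
          refine Finset.mem_union.mpr (Or.inr ?_)
          exact Finset.mem_image.mpr ⟨(u, v), Finset.mem_filter.mpr
            ⟨Finset.mem_product.mpr ⟨Finset.mem_univ _, Finset.mem_univ _⟩, hAuv⟩, rfl⟩
        · simp only [Sum.elim_inl, Sum.elim_inr] at hle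
          push_cast at hle ⊢
          linarith
      · have hAvu : A v u = 1 := by
          have h1 : A v u ≠ 0 := fun hz => hab (by simp [hMdef, intAdj, Bm, hz])
          have := hA1 v u
          omega
        refine ⟨((dU E v + dU E u + dOut A v + dIn A u : ℕ) : ℝ), ?_, ?_⟩
        · rw [hSdef]
          refine Finset.mem_union.mpr (Or.inr ?_)
          exact Finset.mem_image.mpr ⟨(v, u), Finset.mem_filter.mpr
            ⟨Finset.mem_product.mpr ⟨Finset.mem_univ _, Finset.mem_univ _⟩, hAvu⟩, rfl⟩
        · simp only [Sum.elim_inl, Sum.elim_inr] at hle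
          push_cast at hle ⊢
          linarith
      · have hEuv : E u v = 1 := by
          by_cases h : u = v
          · exfalso; apply hab
            simp [hMdef, intAdj, hAu, h, hEloop]
          · have : Au E u v ≠ 0 := by
              simpa [hMdef, intAdj] using hab
            rw [hAu] at this
            have h1 : E u v ≠ 0 := by exact_mod_cast this
            have := hE1 u v
            omega
        refine ⟨((dU E u + dU E v + dIn A u + dIn A v : ℕ) : ℝ), ?_, ?_⟩
        · rw [hSdef]
          refine Finset.mem_union.mpr (Or.inl (Finset.mem_union.mpr (Or.inr ?_)))
          exact Finset.mem_image.mpr ⟨(u, v), Finset.mem_filter.mpr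
            ⟨Finset.mem_product.mpr ⟨Finset.mem_univ _, Finset.mem_univ _⟩, hEuv⟩, rfl⟩
        · simp only [Sum.elim_inr] at hle
          push_cast at hle ⊢
          linarith
    obtain ⟨s, hs, hνs⟩ := hbound
    exact hνs.trans (S.le_max' s hs)
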